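/- For palindromic duplications of length 1 over Z_q (q ≥ 3), the maximal size of a length-n code correcting any number of duplications is q·((q−1)^n − 1)/(q−2), and the coding capacity is log_q(q−1). -/

import Mathlib

/-- One palindromic duplication of length `k`: a `k`-factor `v` of `x`
gets a reversed copy inserted right after it. -/
def PalStep {q : ℕ} (k : ℕ) (x y : List (ZMod q)) : Prop :=
  ∃ u v w : List (ZMod q), v.length = k ∧ x = u ++ v ++ w ∧
    y = u ++ v ++ v.reverse ++ w

/-- Finitely many (possibly zero) palindromic duplications of length `k`. -/
def PalDerives {q : ℕ} (k : ℕ) : List (ZMod q) → List (ZMod q) → Prop :=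
  Relation.ReflTransGen (PalStep k)

/-- `C` is a length-`n` code correcting any number of length-`k` palindromic
duplications: distinct codewords have disjoint descendant cones. -/
def IsPalCode {q : ℕ} (k n : ℕ) (C : Finset (List (ZMod q))) : Prop :=
  (∀ c ∈ C, c.length = n) ∧
    ∀ c ∈ C, ∀ c' ∈ C, c ≠ c' →
      ∀ z, PalDerives k c z → ¬ PalDerives k c' z

/-- The maximal size of such a code. -/
noncomputable def maxPalCode {q : ℕ} (k n : ℕ) : ℕ :=
  sSup {M : ℕ | ∃ C : Finset (List (ZMod q)), IsPalCode k n C ∧ C.card = M}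

namespace S14
set_option linter.unusedSectionVars false
set_option linter.unusedVariables false

variable {q : ℕ}

def dd : List (ZMod q) → List (ZMod q)
  | [] => []
  | [a] => [a]
  | a :: b :: t => if a = b then dd (b :: t) else a :: dd (b :: t)

def ddW (a : ZMod q) : List (ZMod q) → List (ZMod q)
  | [] => []
  | b :: t => if b = a then ddW a t else b :: ddW b t

lemma dd_eq_ddW (a : ZMod q) (t : List (ZMod q)) : dd (a :: t) = a :: ddW a t := by
  induction t generalizing a with
  | nil => simp [dd, ddW]
  | cons b s ih =>
    rcases eq_or_ne a b with h | h
    · subst h; simp only [dd, if_pos rfl, ddW, if_pos rfl, ih]; simp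
    · simp only [dd, if_neg h, ddW, if_neg (Ne.symm h), ih]

lemma dd_cons (a : ZMod q) (t : List (ZMod q)) :
    dd (a :: t) = if t.head? = some a then dd t else a :: dd t := by
  cases t with
  | nil => simp [dd]
  | cons b s =>
    simp only [dd, List.head?_cons, Option.some.injEq]
    rcases eq_or_ne a b with h | h
    · simp [h]
    · simp [h, Ne.symm h]

lemma head?_mid (u w : List (ZMod q)) (a : ZMod q) :
    (u ++ a :: a :: w).head? = (u ++ a :: w).head? := by
  cases u <;> simp

lemma dd_dup (u w : List (ZMod q)) (a : ZMod q) :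
    dd (u ++ a :: a :: w) = dd (u ++ a :: w) := by
  induction u with
  | nil => simp [dd]
  | cons c u ih =>
    simp only [List.cons_append, dd_cons, head?_mid, ih]

lemma dd_of_step {x y : List (ZMod q)} (h : PalStep 1 x y) : dd y = dd x := by
  obtain ⟨u, v, w, hv, hx, hy⟩ := h
  obtain ⟨a, rfl⟩ : ∃ a, v = [a] := by
    cases v with
    | nil => simp at hv
    | cons a t => cases t with
      | nil => exact ⟨a, rfl⟩
      | cons b s => simp at hv
  subst hx hy
  simpa using dd_dup u w a

lemma dd_of_derives {x y : List (ZMod q)} (h : PalDerives 1 x y) : dd y = dd x := by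
  induction h with
  | refl => rfl
  | tail _ hstep ih => rw [dd_of_step hstep, ih]

lemma step_append_left {x y : List (ZMod q)} (p : List (ZMod q)) (h : PalStep 1 x y) :
    PalStep 1 (p ++ x) (p ++ y) := by
  obtain ⟨u, v, w, hv, rfl, rfl⟩ := h
  exact ⟨p ++ u, v, w, hv, by simp, by simp⟩

lemma step_append_right {x y : List (ZMod q)} (s : List (ZMod q)) (h : PalStep 1 x y) :
    PalStep 1 (x ++ s) (y ++ s) := by
  obtain ⟨u, v, w, hv, rfl, rfl⟩ := h
  exact ⟨u, v, w ++ s, hv, by simp, by simp⟩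

lemma derives_append_left {x y : List (ZMod q)} (p : List (ZMod q)) (h : PalDerives 1 x y) :
    PalDerives 1 (p ++ x) (p ++ y) :=
  Relation.ReflTransGen.lift _ (fun _ _ h => step_append_left p h) _ _ h

lemma derives_append_right {x y : List (ZMod q)} (s : List (ZMod q)) (h : PalDerives 1 x y) :
    PalDerives 1 (x ++ s) (y ++ s) :=
  Relation.ReflTransGen.lift _ (fun _ _ h => step_append_right s h) _ _ h

lemma step_replicate (a : ZMod q) (k : ℕ) (hk : 1 ≤ k) :
    PalStep 1 (List.replicate k a) (List.replicate (k + 1) a) := by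
  refine ⟨[], [a], List.replicate (k - 1) a, rfl, ?_, ?_⟩
  · have h : k = (k - 1) + 1 := by omega
    rw [h]; simp [List.replicate_succ]
  · have h : k + 1 = (k - 1) + 1 + 1 := by omega
    rw [h]; simp [List.replicate_succ]

lemma derives_replicate (a : ZMod q) {m M : ℕ} (hm : 1 ≤ m) (hM : m ≤ M) :
    PalDerives 1 (List.replicate m a) (List.replicate M a) := by
  induction M, hM using Nat.le_induction with
  | base => exact Relation.ReflTransGen.refl
  | succ M hM ih => exact ih.tail (step_replicate a M (le_trans hm hM))

lemma pump (t : List (ZMod q)) : ∀ (a : ZMod q) (m M : ℕ), 1 ≤ m → m + t.length ≤ M →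
    PalDerives 1 (List.replicate m a ++ t)
      (List.replicate M a ++ (ddW a t).flatMap (List.replicate M)) := by
  induction t with
  | nil =>
    intro a m M hm hM
    simpa [ddW] using derives_replicate a hm (by simpa using hM)
  | cons b s ih =>
    intro a m M hm hM
    rcases eq_or_ne b a with h | h
    · subst h
      have e : List.replicate m b ++ b :: s = List.replicate (m + 1) b ++ s := by
        simp [List.replicate_succ']
      rw [e, ddW, if_pos rfl]
      exact ih b (m + 1) M (by omega) (by simp at hM ⊢; omega)
    · rw [ddW, if_neg h]
      have h1 : PalDerives 1 (List.replicate m a ++ (b :: s)) (List.replicate M a ++ (b :: s)) :=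
        derives_append_right _ (derives_replicate a hm (by simp at hM; omega))
      have h2 : PalDerives 1 (List.replicate 1 b ++ s)
          (List.replicate M b ++ (ddW b s).flatMap (List.replicate M)) :=
        ih b 1 M le_rfl (by simp at hM ⊢; omega)
      refine h1.trans ?_
      have := derives_append_left (List.replicate M a) h2
      simpa [List.append_assoc, PalDerives] using this

lemma derives_dd_flatMap {x : List (ZMod q)} (hx : x ≠ []) {M : ℕ} (hM : x.length ≤ M) :
    PalDerives 1 x ((dd x).flatMap (List.replicate M)) := by
  cases x with
  | nil => exact absurd rfl hx
  | cons a t =>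
    rw [dd_eq_ddW]
    have := pump t a 1 M le_rfl (by simp at hM ⊢; omega)
    simpa using this

lemma dd_ne_nil {l : List (ZMod q)} (h : l ≠ []) : dd l ≠ [] := by
  cases l with
  | nil => exact absurd rfl h
  | cons a t => rw [dd_eq_ddW]; simp

lemma dd_chain' (l : List (ZMod q)) : List.Chain' (· ≠ ·) (dd l) := by
  induction l with
  | nil => simp [dd]; exact List.isChain_nil
  | cons a t ih =>
    cases t with
    | nil => simp [dd]; exact List.isChain_singleton a
    | cons b s =>
      rcases eq_or_ne a b with h | h
      · rw [dd, if_pos h]; exact ih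
      · rw [dd, if_neg h]
        rw [dd_eq_ddW] at ih ⊢
        exact List.IsChain.cons_cons h ih

lemma dd_length_le (l : List (ZMod q)) : (dd l).length ≤ l.length := by
  induction l with
  | nil => simp [dd]
  | cons a t ih =>
    cases t with
    | nil => simp [dd]
    | cons b s =>
      rcases eq_or_ne a b with h | h
      · rw [dd, if_pos h]; exact le_trans ih (by simp)
      · rw [dd, if_neg h]; simpa using ih

lemma dd_fixed {l : List (ZMod q)} (h : List.Chain' (· ≠ ·) l) : dd l = l := by
  induction l with
  | nil => simp [dd]
  | cons a t ih =>
    cases t with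
    | nil => simp [dd]
    | cons b s =>
      have hab : a ≠ b := (List.isChain_cons_cons.mp h).1
      rw [dd, if_neg hab, ih (List.isChain_cons_cons.mp h).2]

lemma dd_append_replicate (x : List (ZMod q)) (a : ZMod q) :
    ∀ k, 1 ≤ k → dd (x ++ List.replicate k a) = dd (x ++ [a]) := by
  intro k hk
  induction k with
  | zero => omega
  | succ k ih =>
    rcases Nat.eq_or_lt_of_le hk with h | h
    · rw [← h]; simp
    · have hk1 : 1 ≤ k := by omega
      have e : x ++ List.replicate (k + 1) a = x ++ a :: a :: List.replicate (k - 1) a := by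
        congr 1
        have : k + 1 = (k - 1) + 1 + 1 := by omega
        rw [this]; simp [List.replicate_succ]
      have e2 : x ++ List.replicate k a = x ++ a :: List.replicate (k - 1) a := by
        congr 1
        have : k = (k - 1) + 1 := by omega
        rw [this]; simp [List.replicate_succ]
      rw [e, dd_dup, ← e2, ih hk1]

lemma dd_append_last {s : List (ZMod q)} (h : s ≠ []) :
    dd (s ++ [s.getLastD 0]) = dd s := by
  obtain ⟨u, a, rfl⟩ := List.eq_nil_or_concat s |>.resolve_left h
  rw [List.concat_eq_append]
  have hg : (u ++ [a]).getLastD 0 = a := by simp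
  rw [hg]
  have := dd_dup u ([] : List (ZMod q)) a
  simpa [List.append_assoc] using this

/-! ### Counting -/

def Sl (q : ℕ) [NeZero q] : ℕ → Finset (List (ZMod q))
  | 0 => {[]}
  | (ℓ+1) => (Sl q ℓ).biUnion (fun l =>
      (Finset.univ.filter (fun a : ZMod q => l.head? ≠ some a)).image (fun a => a :: l))

variable [NeZero q]

lemma mem_Sl (ℓ : ℕ) (l : List (ZMod q)) :
    l ∈ Sl q ℓ ↔ l.length = ℓ ∧ List.Chain' (· ≠ ·) l := by
  induction ℓ generalizing l with
  | zero =>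
    simp only [Sl, Finset.mem_singleton]
    constructor
    · rintro rfl; simp; exact List.isChain_nil
    · rintro ⟨h, -⟩; exact List.length_eq_zero_iff.mp h
  | succ ℓ ih =>
    simp only [Sl, Finset.mem_biUnion, Finset.mem_image, Finset.mem_filter, Finset.mem_univ,
      true_and]
    constructor
    · rintro ⟨t, ht, a, ha, rfl⟩
      obtain ⟨hlen, hch⟩ := (ih t).mp ht
      refine ⟨by simp [hlen], List.isChain_cons.mpr ⟨?_, hch⟩⟩
      intro b hb
      cases t with
      | nil => simp at hb
      | cons c s =>
        simp only [List.head?_cons, Option.mem_def, Option.some.injEq] at hb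
        simp only [List.head?_cons, ne_eq, Option.some.injEq] at ha
        subst hb
        exact fun e => ha e.symm
    · rintro ⟨hlen, hch⟩
      cases l with
      | nil => simp at hlen
      | cons a t =>
        obtain ⟨hh, hch'⟩ := List.isChain_cons.mp hch
        refine ⟨t, (ih t).mpr ⟨by simpa using hlen, hch'⟩, a, ?_, rfl⟩
        cases t with
        | nil => simp
        | cons c s =>
          simp only [List.head?_cons, ne_eq, Option.some.injEq]
          intro e
          exact (hh c (by simp)) e.symm

lemma card_Sl_succ (ℓ : ℕ) (hℓ : 1 ≤ ℓ) :
    (Sl q (ℓ + 1)).card = (q - 1) * (Sl q ℓ).card := by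
  rw [Sl, Finset.card_biUnion]
  · rw [Finset.sum_congr rfl (fun l hl => ?_), Finset.sum_const, smul_eq_mul, mul_comm]
    rw [Finset.card_image_of_injective _ (fun a b h => by injection h)]
    obtain ⟨b, t, rfl⟩ : ∃ b t, l = b :: t := by
      obtain ⟨hlen, -⟩ := (mem_Sl ℓ l).mp hl
      cases l with
      | nil => simp at hlen; omega
      | cons b t => exact ⟨b, t, rfl⟩
    have : (Finset.univ.filter (fun a : ZMod q => (b :: t).head? ≠ some a)) = {b}ᶜ := by
      ext a
      simp [eq_comm]
    rw [this, Finset.card_compl, ZMod.card, Finset.card_singleton]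
  · intro x hx y hy hxy
    simp only [Finset.disjoint_left, Finset.mem_image, Finset.mem_filter]
    rintro z ⟨a, -, rfl⟩ ⟨b, -, hb⟩
    exact hxy (by injection hb with _ h; exact h.symm ▸ rfl)

lemma card_Sl (ℓ : ℕ) (hℓ : 1 ≤ ℓ) : (Sl q ℓ).card = q * (q - 1) ^ (ℓ - 1) := by
  induction ℓ with
  | zero => omega
  | succ ℓ ih =>
    rcases Nat.eq_or_lt_of_le hℓ with h | h
    · rw [← h]
      have : (Sl q 1).card = q := by
        rw [Sl, Finset.card_biUnion]
        · simp only [Sl, Finset.mem_singleton, Finset.sum_singleton]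
          rw [Finset.card_image_of_injective _ (fun a b h => by injection h)]
          simp [ZMod.card]
        · simp [Sl]
      simpa using this
    · have h1 : 1 ≤ ℓ := by omega
      rw [card_Sl_succ ℓ h1, ih h1]
      have : ℓ + 1 - 1 = (ℓ - 1) + 1 := by omega
      rw [this, pow_succ]
      ring

def bigS (q : ℕ) [NeZero q] (n : ℕ) : Finset (List (ZMod q)) :=
  (Finset.Icc 1 n).biUnion (Sl q)

lemma mem_bigS (n : ℕ) (l : List (ZMod q)) :
    l ∈ bigS q n ↔ l ≠ [] ∧ l.length ≤ n ∧ List.Chain' (· ≠ ·) l := by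
  simp only [bigS, Finset.mem_biUnion, Finset.mem_Icc, mem_Sl]
  constructor
  · rintro ⟨ℓ, ⟨h1, h2⟩, rfl, hc⟩
    exact ⟨by rintro rfl; simp at h1, h2, hc⟩
  · rintro ⟨h0, h1, hc⟩
    exact ⟨l.length, ⟨by cases l with | nil => exact absurd rfl h0 | cons a t => simp, h1⟩,
      rfl, hc⟩

lemma geo_mul (hq : 3 ≤ q) (n : ℕ) :
    (q - 2) * ∑ i ∈ Finset.range n, (q - 1) ^ i = (q - 1) ^ n - 1 := by
  induction n with
  | zero => simp
  | succ n ih =>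
    rw [Finset.sum_range_succ, mul_add, ih, pow_succ]
    have h1 : 1 ≤ (q - 1) ^ n := Nat.one_le_pow _ _ (by omega)
    have h2 : (q - 1) ^ n * (q - 1) = (q - 1) ^ n + (q - 2) * (q - 1) ^ n := by
      have : q - 1 = 1 + (q - 2) := by omega
      rw [this, mul_add, mul_one, mul_comm]
    omega

lemma Ndiv (hq : 3 ≤ q) (n : ℕ) :
    q * ((q - 1) ^ n - 1) / (q - 2) = q * ∑ i ∈ Finset.range n, (q - 1) ^ i := by
  rw [← geo_mul hq n, mul_left_comm, Nat.mul_div_cancel_left _ (by omega : 0 < q - 2)]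

lemma geo_le (hq : 3 ≤ q) (n : ℕ) :
    ∑ i ∈ Finset.range n, (q - 1) ^ i ≤ (q - 1) ^ n := by
  induction n with
  | zero => simp
  | succ n ih =>
    rw [Finset.sum_range_succ, pow_succ]
    have h2 : 2 ≤ q - 1 := by omega
    nlinarith [Nat.one_le_pow n (q-1) (by omega : 0 < q - 1)]

lemma card_bigS (hq : 3 ≤ q) (n : ℕ) :
    (bigS q n).card = q * ((q - 1) ^ n - 1) / (q - 2) := by
  rw [bigS, Finset.card_biUnion, Ndiv hq n]
  · rw [Finset.sum_congr rfl (fun ℓ hℓ => card_Sl ℓ (Finset.mem_Icc.mp hℓ).1)]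
    rw [Finset.mul_sum]
    rw [show Finset.Icc 1 n = Finset.Ico 1 (n + 1) by rfl]
    rw [Finset.sum_Ico_eq_sum_range]
    simp
  · intro x hx y hy hxy
    simp only [Finset.disjoint_left]
    intro l hlx hly
    exact hxy (((mem_Sl x l).mp hlx).1 ▸ ((mem_Sl y l).mp hly).1 ▸ rfl)

/-- the extension map -/
def extf (n : ℕ) (s : List (ZMod q)) : List (ZMod q) :=
  s ++ List.replicate (n - s.length) (s.getLastD 0)

lemma dd_extf {n : ℕ} {s : List (ZMod q)} (hs : s ∈ bigS q n) : dd (extf n s) = s := by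
  obtain ⟨h0, h1, hc⟩ := (mem_bigS n s).mp hs
  rw [extf]
  rcases Nat.eq_zero_or_pos (n - s.length) with h | h
  · rw [h]; simpa using dd_fixed hc
  · rw [dd_append_replicate s _ _ h, dd_append_last h0, dd_fixed hc]

lemma extf_length {n : ℕ} {s : List (ZMod q)} (hs : s ∈ bigS q n) : (extf n s).length = n := by
  obtain ⟨-, h1, -⟩ := (mem_bigS n s).mp hs
  simp [extf]; omega

/-- injectivity on codewords from common descendants -/
lemma dd_injOn_code {n : ℕ} (hn : 1 ≤ n) {C : Finset (List (ZMod q))}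
    (hC : IsPalCode 1 n C) : Set.InjOn dd (C : Set (List (ZMod q))) := by
  intro c hc c' hc' hdd
  by_contra hne
  set M := max c.length c'.length with hM
  have hcne : c ≠ [] := by
    intro h; have := hC.1 c hc; rw [h] at this; simp at this; omega
  have hcne' : c' ≠ [] := by
    intro h; have := hC.1 c' hc'; rw [h] at this; simp at this; omega
  have d1 : PalDerives 1 c ((dd c).flatMap (List.replicate M)) :=
    derives_dd_flatMap hcne (le_max_left _ _)
  have d2 : PalDerives 1 c' ((dd c).flatMap (List.replicate M)) := by
    rw [hdd]
    exact derives_dd_flatMap hcne' (le_max_right _ _)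
  exact hC.2 c hc c' hc' hne _ d1 d2

/-- the optimal code -/
lemma exists_code (hq : 3 ≤ q) {n : ℕ} (hn : 1 ≤ n) :
    ∃ C : Finset (List (ZMod q)), IsPalCode 1 n C ∧
      C.card = q * ((q - 1) ^ n - 1) / (q - 2) := by
  refine ⟨(bigS q n).image (extf n), ⟨?_, ?_⟩, ?_⟩
  · rintro c hc
    obtain ⟨s, hs, rfl⟩ := Finset.mem_image.mp hc
    exact extf_length hs
  · rintro c hc c' hc' hne z hz hz'
    obtain ⟨s, hs, rfl⟩ := Finset.mem_image.mp hc
    obtain ⟨s', hs', rfl⟩ := Finset.mem_image.mp hc'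
    have : s = s' := by
      rw [← dd_extf hs, ← dd_extf hs', ← dd_of_derives hz, ← dd_of_derives hz']
    exact hne (this ▸ rfl)
  · rw [Finset.card_image_of_injOn, card_bigS hq n]
    intro s hs s' hs' h
    rw [← dd_extf hs, ← dd_extf hs', h]

lemma card_le (hq : 3 ≤ q) {n : ℕ} (hn : 1 ≤ n) {C : Finset (List (ZMod q))}
    (hC : IsPalCode 1 n C) : C.card ≤ q * ((q - 1) ^ n - 1) / (q - 2) := by
  rw [← card_bigS hq n]
  apply Finset.card_le_card_of_injOn dd
  · intro c hc
    have hlen := hC.1 c hc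
    have hcne : c ≠ [] := by intro h; rw [h] at hlen; simp at hlen; omega
    rw [Finset.mem_coe, mem_bigS]
    exact ⟨dd_ne_nil hcne, le_trans (dd_length_le c) (le_of_eq hlen), dd_chain' c⟩
  · exact dd_injOn_code hn hC

lemma isGreatest (hq : 3 ≤ q) {n : ℕ} (hn : 1 ≤ n) :
    IsGreatest {M : ℕ | ∃ C : Finset (List (ZMod q)),
      IsPalCode 1 n C ∧ C.card = M} (q * ((q - 1) ^ n - 1) / (q - 2)) := by
  constructor
  · exact exists_code hq hn
  · rintro M ⟨C, hC, rfl⟩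
    exact card_le hq hn hC



lemma Nn_lower (hq : 3 ≤ q) {n : ℕ} (hn : 1 ≤ n) :
    (q - 1) ^ n ≤ q * ((q - 1) ^ n - 1) / (q - 2) := by
  rw [Ndiv hq n]
  have h1 : (q - 1) ^ (n - 1) ≤ ∑ i ∈ Finset.range n, (q - 1) ^ i :=
    Finset.single_le_sum (f := fun i => (q - 1) ^ i) (fun i _ => Nat.zero_le _)
      (Finset.mem_range.mpr (by omega))
  calc (q - 1) ^ n = (q - 1) * (q - 1) ^ (n - 1) := by
        rw [← pow_succ']; congr 1; omega
    _ ≤ q * (q - 1) ^ (n - 1) := Nat.mul_le_mul_right _ (by omega)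
    _ ≤ q * ∑ i ∈ Finset.range n, (q - 1) ^ i := Nat.mul_le_mul_left _ h1

lemma Nn_upper (hq : 3 ≤ q) (n : ℕ) :
    q * ((q - 1) ^ n - 1) / (q - 2) ≤ q * (q - 1) ^ n := by
  rw [Ndiv hq n]; exact Nat.mul_le_mul_left _ (geo_le hq n)

end S14

/-- For `q ≥ 3` and `n ≥ 1`, the maximal size of a length-`n` `q`-ary code
correcting any number of length-1 palindromic duplications equals
`q·((q−1)^n − 1)/(q−2)`, and the coding capacity is `log_q (q−1)`. -/
theorem stmt14 {q : ℕ} (hq : 3 ≤ q) :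
    (∀ n : ℕ, 1 ≤ n →
      IsGreatest {M : ℕ | ∃ C : Finset (List (ZMod q)),
        IsPalCode 1 n C ∧ C.card = M} (q * ((q - 1) ^ n - 1) / (q - 2))) ∧
    Filter.limsup (fun n : ℕ => Real.logb q ((maxPalCode (q := q) 1 n : ℕ) : ℝ) / n)
      Filter.atTop = Real.logb q (q - 1) := by
  haveI : NeZero q := ⟨by omega⟩
  have part1 : ∀ n : ℕ, 1 ≤ n →
      IsGreatest {M : ℕ | ∃ C : Finset (List (ZMod q)),
        IsPalCode 1 n C ∧ C.card = M} (q * ((q - 1) ^ n - 1) / (q - 2)) :=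
    fun n hn => S14.isGreatest hq hn
  refine ⟨part1, ?_⟩
  have hmax : ∀ n : ℕ, 1 ≤ n →
      maxPalCode (q := q) 1 n = q * ((q - 1) ^ n - 1) / (q - 2) :=
    fun n hn => (part1 n hn).csSup_eq
  have hlow : ∀ n, 1 ≤ n → (q - 1) ^ n ≤ maxPalCode (q := q) 1 n := fun n hn => by
    rw [hmax n hn]; exact S14.Nn_lower hq hn
  have hupp : ∀ n, 1 ≤ n → maxPalCode (q := q) 1 n ≤ q * (q - 1) ^ n := fun n hn => by
    rw [hmax n hn]; exact S14.Nn_upper hq n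
  set N : ℕ → ℕ := fun n => maxPalCode (q := q) 1 n with hN
  have hq3 : (3:ℝ) ≤ (q:ℝ) := by exact_mod_cast hq
  have hq1 : (1:ℝ) < (q:ℝ) := by linarith
  have hq0 : (0:ℝ) < (q:ℝ) - 1 := by linarith
  set c : ℝ := Real.logb q ((q:ℝ) - 1) with hc
  show Filter.limsup (fun n : ℕ => Real.logb q ((N n : ℕ) : ℝ) / n) Filter.atTop = c
  apply Filter.Tendsto.limsup_eq
  have hub : Filter.Tendsto (fun n : ℕ => c + 1 / (n:ℝ)) Filter.atTop (nhds c) := by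
    simpa using tendsto_const_nhds.add (tendsto_one_div_atTop_nhds_zero_nat (𝕜 := ℝ))
  refine tendsto_of_tendsto_of_tendsto_of_le_of_le' (tendsto_const_nhds) hub ?_ ?_
  · filter_upwards [Filter.eventually_ge_atTop 1] with n hn
    have hnR : (0:ℝ) < (n:ℝ) := by exact_mod_cast hn
    have h1 : ((q:ℝ) - 1) ^ n ≤ (N n : ℝ) := by
      have h' : (((q - 1) ^ n : ℕ) : ℝ) ≤ (N n : ℝ) := by exact_mod_cast hlow n hn
      calc ((q:ℝ) - 1) ^ n = (((q - 1 : ℕ)) : ℝ) ^ n := by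
            rw [Nat.cast_sub (by omega), Nat.cast_one]
        _ ≤ (N n : ℝ) := by push_cast at h' ⊢; exact h'
    have hpow : (0:ℝ) < ((q:ℝ) - 1) ^ n := pow_pos hq0 n
    have h2 : (n:ℝ) * c ≤ Real.logb q (N n : ℝ) := by
      rw [hc, ← Real.logb_pow]
      exact Real.logb_le_logb_of_le hq1 hpow h1
    rw [le_div_iff₀ hnR]
    linarith [h2]
  · filter_upwards [Filter.eventually_ge_atTop 1] with n hn
    have hnR : (0:ℝ) < (n:ℝ) := by exact_mod_cast hn
    have h1 : ((q:ℝ) - 1) ^ n ≤ (N n : ℝ) := by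
      have h' : (((q - 1) ^ n : ℕ) : ℝ) ≤ (N n : ℝ) := by exact_mod_cast hlow n hn
      calc ((q:ℝ) - 1) ^ n = (((q - 1 : ℕ)) : ℝ) ^ n := by
            rw [Nat.cast_sub (by omega), Nat.cast_one]
        _ ≤ (N n : ℝ) := by push_cast at h' ⊢; exact h'
    have hpow : (0:ℝ) < ((q:ℝ) - 1) ^ n := pow_pos hq0 n
    have hNpos : (0:ℝ) < (N n : ℝ) := lt_of_lt_of_le hpow h1
    have h2 : (N n : ℝ) ≤ (q:ℝ) * ((q:ℝ) - 1) ^ n := by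
      have h' : ((N n : ℕ) : ℝ) ≤ ((q * (q - 1) ^ n : ℕ) : ℝ) := by exact_mod_cast hupp n hn
      calc (N n : ℝ) ≤ ((q * (q - 1) ^ n : ℕ) : ℝ) := h'
        _ = (q:ℝ) * ((q:ℝ) - 1) ^ n := by
            push_cast [Nat.cast_sub (by omega : 1 ≤ q)]; ring
    have h3 : Real.logb q (N n : ℝ) ≤ 1 + (n:ℝ) * c := by
      calc Real.logb q (N n : ℝ) ≤ Real.logb q ((q:ℝ) * ((q:ℝ) - 1) ^ n) :=
            Real.logb_le_logb_of_le hq1 hNpos h2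
        _ = Real.logb q (q:ℝ) + Real.logb q (((q:ℝ) - 1) ^ n) :=
            Real.logb_mul (by linarith) (ne_of_gt hpow)
        _ = 1 + (n:ℝ) * c := by
            rw [Real.logb_self_eq_one hq1, Real.logb_pow, hc]
    rw [div_le_iff₀ hnR]
    have he : (c + 1 / (n:ℝ)) * (n:ℝ) = c * n + 1 := by field_simp
    rw [he]
    linarith [h3]
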